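/- Let $\theta \ge 0$ be real, let $n \ge 1$ and $1 \le r \le n$ be integers, and let $t \ge 0$. Then $\sum_{l=r}^{n} \frac{l!}{(l-r)!}\, q^{\theta}_{n,l}(t) = \sum_{k=r}^{n} e^{-k(k+\theta-1)t/2}\,(2k+\theta-1)\,\binom{k-1}{r-1}\,(\theta+k)^{(r-1)}\,\frac{n^{[k]}}{(n+\theta)^{(k)}}$. (These are the $r$-th falling factorial moments $\mathbb{E}[A_n^{\theta}(t)_{[r]}]$ of the number of ancestral lineages.) -/

import Mathlib

open Finset

/-- Rising factorial `x^{(m)} = x (x+1) ⋯ (x+m-1)` of a real number. -/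
noncomputable def risingFac (x : ℝ) (m : ℕ) : ℝ := ∏ i ∈ Finset.range m, (x + i)

/-- Falling factorial `n^{[j]} = n (n-1) ⋯ (n-j+1)` of a natural number, as a real. -/
noncomputable def fallingFac (n : ℕ) (j : ℕ) : ℝ := ∏ i ∈ Finset.range j, ((n : ℝ) - i)

/-- `q θ n k t = P(A_n^θ(t) = k)`. -/
noncomputable def q (θ : ℝ) (n k : ℕ) (t : ℝ) : ℝ :=
  ∑ j ∈ Finset.Icc k n,
    Real.exp (-(j * (j + θ - 1) * t) / 2) * (-1 : ℝ) ^ (j - k) *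
      ((2 * j + θ - 1) * risingFac (k + θ) (j - 1)) /
        ((Nat.factorial k : ℝ) * (Nat.factorial (j - k) : ℝ)) *
      (fallingFac n j / risingFac (n + θ) j)

lemma risingFac_succ (x : ℝ) (m : ℕ) : risingFac x (m+1) = risingFac x m * (x + m) := by
  simp [risingFac, Finset.prod_range_succ]

lemma risingFac_succ' (x : ℝ) (m : ℕ) : risingFac x (m+1) = x * risingFac (x+1) m := by
  rw [risingFac, Finset.prod_range_succ']
  simp only [Nat.cast_zero, add_zero]
  rw [mul_comm, risingFac]
  congr 1
  exact Finset.prod_congr rfl fun i _ => by push_cast; ring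

lemma risingFac_diff (x : ℝ) (e : ℕ) :
    risingFac (x+1) (e+1) - risingFac x (e+1) = (e+1) * risingFac (x+1) e := by
  rw [risingFac_succ, risingFac_succ']
  ring

lemma sum_pascal (M : ℕ) (g : ℕ → ℝ) :
    ∑ m ∈ range (M+2), (-1:ℝ)^m * (Nat.choose (M+1) m) * g m
      = (∑ m ∈ range (M+1), (-1:ℝ)^m * (Nat.choose M m) * g m)
        - ∑ m ∈ range (M+1), (-1:ℝ)^m * (Nat.choose M m) * g (m+1) := by
  rw [Finset.sum_range_succ' (fun m => (-1:ℝ)^m * (Nat.choose (M+1) m) * g m) (M+1)]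
  rw [Finset.sum_range_succ' (fun m => (-1:ℝ)^m * (Nat.choose M m) * g m) M]
  have h1 : ∀ m ∈ range (M+1), (-1:ℝ)^(m+1) * (Nat.choose (M+1) (m+1)) * g (m+1)
      = ((-1:ℝ)^(m+1) * (Nat.choose M (m+1)) * g (m+1))
        + (-((-1:ℝ)^m * (Nat.choose M m) * g (m+1))) := by
    intro m _
    rw [Nat.choose_succ_succ]
    push_cast
    ring
  rw [Finset.sum_congr rfl h1, Finset.sum_add_distrib]
  have h2 : ∑ m ∈ range (M+1), ((-1:ℝ)^(m+1) * (Nat.choose M (m+1)) * g (m+1))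
      = ∑ m ∈ range M, ((-1:ℝ)^(m+1) * (Nat.choose M (m+1)) * g (m+1)) := by
    rw [Finset.sum_range_succ]
    simp
  rw [h2]
  simp only [Nat.choose_zero_right, Nat.cast_one, Finset.sum_neg_distrib]
  ring

lemma fd (d : ℕ) : ∀ M, M ≤ d → ∀ x : ℝ,
    ∑ m ∈ range (M+1), (-1:ℝ)^m * (Nat.choose M m) * risingFac (x + m) d
      = (-1:ℝ)^M * (∏ i ∈ range M, ((d:ℝ) - i)) * risingFac (x + M) (d - M) := by
  intro M
  induction M with
  | zero => intro _ x; simp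
  | succ M ih =>
    intro hMd x
    have hM : M ≤ d := le_of_lt hMd
    have hcast : ∀ m : ℕ, risingFac (x + ↑(m+1)) d = risingFac ((x+1) + m) d := by
      intro m; congr 1; push_cast; ring
    rw [sum_pascal M (fun m => risingFac (x + m) d)]
    simp only [hcast]
    rw [ih hM x, ih hM (x+1)]
    have he : d - M = (d - (M+1)) + 1 := by omega
    have hdiff := risingFac_diff (x + M) (d - (M+1))
    have harg : (x + 1) + (M:ℝ) = (x + M) + 1 := by ring
    rw [harg, he, ← sub_eq_zero]
    have hprod : (∏ i ∈ range (M+1), ((d:ℝ) - i)) = (∏ i ∈ range M, ((d:ℝ) - i)) * ((d:ℝ) - M) := by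
      rw [Finset.prod_range_succ]
    have hcast2 : ((d - (M+1) : ℕ) : ℝ) + 1 = (d:ℝ) - M := by
      have : ((d - (M+1) : ℕ) : ℝ) = (d:ℝ) - (M+1) := by
        rw [Nat.cast_sub hMd]; push_cast; ring
      rw [this]; ring
    have harg2 : (x + M) + 1 = x + ((M:ℝ)+1) := by ring
    have harg3 : x + ((M+1 : ℕ):ℝ) = (x + M) + 1 := by push_cast; ring
    rw [hprod, harg3, ← he]
    rw [hcast2, ← he] at hdiff
    rw [pow_succ]
    linear_combination (-((-1:ℝ)^M * ∏ i ∈ range M, ((d:ℝ) - i))) * hdiff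

lemma key (θ : ℝ) (r j : ℕ) (hr : 1 ≤ r) (hrj : r ≤ j) :
    ∑ l ∈ Finset.Icc r j, (-1:ℝ)^(j-l) * risingFac (↑l + θ) (j-1)
        / ((Nat.factorial (l-r) : ℝ) * (Nat.factorial (j-l) : ℝ))
      = (Nat.choose (j-1) (r-1) : ℝ) * risingFac (θ + j) (r-1) := by
  set M := j - r with hM
  set d := j - 1 with hd
  have hMd : M ≤ d := by omega
  have hjr : j + 1 - r = M + 1 := by omega
  rw [← Finset.Ico_add_one_right_eq_Icc, Finset.sum_Ico_eq_sum_range, hjr]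
  have hstep : ∀ m ∈ range (M+1),
      (-1:ℝ)^(j-(r+m)) * risingFac (↑(r+m) + θ) (j-1)
        / ((Nat.factorial (r+m-r) : ℝ) * (Nat.factorial (j-(r+m)) : ℝ))
      = ((-1:ℝ)^M / (Nat.factorial M : ℝ)) *
          ((-1:ℝ)^m * (Nat.choose M m : ℝ) * risingFac ((↑r + θ) + m) d) := by
    intro m hm
    have hmM : m ≤ M := by
      simp only [Finset.mem_range] at hm; omega
    have h1 : j - (r+m) = M - m := by omega
    have h2 : r + m - r = m := by omega
    have h3 : (-1:ℝ)^(M-m) = (-1:ℝ)^M * (-1:ℝ)^m := by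
      have : (-1:ℝ)^(M-m) * ((-1:ℝ)^m * (-1:ℝ)^m) = (-1:ℝ)^M * (-1:ℝ)^m := by
        rw [← mul_assoc, ← pow_add, Nat.sub_add_cancel hmM]
      simpa [← pow_add, ← two_mul] using this
    have h4 : (Nat.choose M m : ℝ) * (Nat.factorial m : ℝ) * (Nat.factorial (M-m) : ℝ)
        = (Nat.factorial M : ℝ) := by
      exact_mod_cast congrArg (Nat.cast (R := ℝ)) (Nat.choose_mul_factorial_mul_factorial hmM)
    have h5 : (↑(r+m) : ℝ) + θ = (↑r + θ) + m := by push_cast; ring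
    rw [h1, h2, h3, h5, ← hd]
    have hm0 : (Nat.factorial m : ℝ) ≠ 0 := by positivity
    have hMm0 : (Nat.factorial (M-m) : ℝ) ≠ 0 := by positivity
    have hM0 : (Nat.factorial M : ℝ) ≠ 0 := by positivity
    field_simp
    linear_combination (-(risingFac (↑r + θ + ↑m) d)) * h4
  rw [Finset.sum_congr rfl hstep, ← Finset.mul_sum, fd d M hMd (↑r + θ)]
  have hdesc : (∏ i ∈ range M, ((d:ℝ) - i)) = ((Nat.factorial M : ℝ) * (Nat.choose d M : ℝ)) := by
    have h6 : Nat.descFactorial d M = Nat.factorial M * Nat.choose d M :=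
      Nat.descFactorial_eq_factorial_mul_choose d M
    have h7 : (Nat.descFactorial d M : ℝ) = ∏ i ∈ range M, ((d:ℝ) - i) := by
      rw [Nat.descFactorial_eq_prod_range, Nat.cast_prod]
      refine Finset.prod_congr rfl fun i hi => ?_
      have : i ≤ d := by simp only [Finset.mem_range] at hi; omega
      rw [Nat.cast_sub this]
    rw [← h7, h6]; push_cast; ring
  have hchoose : Nat.choose d M = Nat.choose (j-1) (r-1) := by
    have : d - M = r - 1 := by omega
    rw [← Nat.choose_symm hMd, this, hd]
  have harg : (↑r + θ) + (M:ℝ) = θ + j := by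
    rw [hM, Nat.cast_sub hrj]; ring
  have hdM : d - M = r - 1 := by omega
  rw [hdesc, hchoose, harg, hdM]
  have hM0 : (Nat.factorial M : ℝ) ≠ 0 := by positivity
  have hsq : (-1:ℝ)^M * (-1:ℝ)^M = 1 := by
    rw [← pow_add]; simp [pow_add, ← two_mul, pow_mul]
  field_simp
  linear_combination ((Nat.choose (j-1) (r-1) : ℝ) * risingFac (θ + j) (r-1)) * hsq

/-- The `r`-th falling factorial moment of the number of ancestral lineages:
`∑_{l=r}^n l!/(l-r)! q^θ_{n,l}(t)
  = ∑_{k=r}^n e^{-k(k+θ-1)t/2} (2k+θ-1) C(k-1,r-1) (θ+k)^{(r-1)} n^{[k]}/(n+θ)^{(k)}`. -/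
theorem stmt_2 (θ : ℝ) (hθ : 0 ≤ θ) (n r : ℕ) (hn : 1 ≤ n) (hr : 1 ≤ r) (hrn : r ≤ n)
    (t : ℝ) (ht : 0 ≤ t) :
    ∑ l ∈ Finset.Icc r n, ((Nat.factorial l : ℝ) / (Nat.factorial (l - r) : ℝ)) * q θ n l t
      = ∑ k ∈ Finset.Icc r n,
          Real.exp (-(k * (k + θ - 1) * t) / 2) * (2 * k + θ - 1) *
            (Nat.choose (k - 1) (r - 1) : ℝ) * risingFac (θ + k) (r - 1) *
            (fallingFac n k / risingFac (n + θ) k) := by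
  simp only [q, Finset.mul_sum]
  rw [Finset.sum_comm' (t' := Finset.Icc r n) (s' := fun j => Finset.Icc r j)
    (fun l j => by simp only [Finset.mem_Icc]; omega)]
  refine Finset.sum_congr rfl fun j hj => ?_
  simp only [Finset.mem_Icc] at hj
  have hterm : ∀ l ∈ Finset.Icc r j,
      ((Nat.factorial l : ℝ) / (Nat.factorial (l - r) : ℝ)) *
        (Real.exp (-(j * (j + θ - 1) * t) / 2) * (-1 : ℝ) ^ (j - l) *
          ((2 * j + θ - 1) * risingFac (l + θ) (j - 1)) /
            ((Nat.factorial l : ℝ) * (Nat.factorial (j - l) : ℝ)) *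
          (fallingFac n j / risingFac (n + θ) j))
      = (Real.exp (-(j * (j + θ - 1) * t) / 2) * (2 * j + θ - 1) *
          (fallingFac n j / risingFac (n + θ) j)) *
        ((-1:ℝ)^(j-l) * risingFac (↑l + θ) (j-1)
          / ((Nat.factorial (l-r) : ℝ) * (Nat.factorial (j-l) : ℝ))) := by
    intro l hl
    have hl0 : (Nat.factorial l : ℝ) ≠ 0 := by positivity
    have hlr0 : (Nat.factorial (l-r) : ℝ) ≠ 0 := by positivity
    have hjl0 : (Nat.factorial (j-l) : ℝ) ≠ 0 := by positivity
    have hcancel : (Nat.factorial l : ℝ) / (Nat.factorial (l-r) : ℝ)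
        / ((Nat.factorial l : ℝ) * (Nat.factorial (j-l) : ℝ))
        = 1 / ((Nat.factorial (l-r) : ℝ) * (Nat.factorial (j-l) : ℝ)) := by
      field_simp
    linear_combination (Real.exp (-(j * (j + θ - 1) * t) / 2) * (-1:ℝ)^(j-l) *
      ((2 * j + θ - 1) * risingFac (↑l + θ) (j-1)) *
      (fallingFac n j / risingFac (n + θ) j)) * hcancel
  rw [Finset.sum_congr rfl hterm, ← Finset.mul_sum, key θ r j hr hj.1]
  ring
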